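/- If k11(η) ≠ 0, the scaled torque M1 is an odd function: M1(−ψ) = −M1(ψ) for every ψ ∈ ℝ (so the phase space of the system φ' = Φ, Φ' = M1(φ) is symmetric with respect to φ = 0). -/
import Mathlib

open Real

/-- Solar-radiation-pressure torque coefficient `k11`. -/
noncomputable def k11 (w mb ms d α η : ℝ) : ℝ :=
  Real.sin α * (2 * d * mb * (2 * η * Real.cos (2 * α) + η + 1) +
    w * (mb + ms) * (Real.cos α - η * Real.cos (3 * α)))

/-- Torque coefficient `k20`. -/
noncomputable def k20 (w mb ms d α η : ℝ) : ℝ :=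
  Real.sin α ^ 2 * (4 * d * η * mb * Real.cos α +
    w * (mb + ms) * (1 - η * Real.cos (2 * α)))

/-- Torque coefficient `k02`. -/
noncomputable def k02 (w mb ms d α η : ℝ) : ℝ :=
  Real.cos α * (2 * d * mb * (η * Real.cos (2 * α) + 1) +
    η * w * (mb + ms) * Real.sin α * Real.sin (2 * α))

/-- Scaled torque produced by panel `P₊`. -/
noncomputable def M0plus (w mb ms d α η : ℝ) (ψ : ℝ) : ℝ :=
  -(1 / 2) * Real.sin (2 * ψ)
    + (k20 w mb ms d α η / k11 w mb ms d α η) * Real.cos ψ ^ 2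
    + (k02 w mb ms d α η / k11 w mb ms d α η) * Real.sin ψ ^ 2

/-- Scaled torque produced by panel `P₋`. -/
noncomputable def M0minus (w mb ms d α η : ℝ) (ψ : ℝ) : ℝ :=
  -(1 / 2) * Real.sin (2 * ψ)
    - (k20 w mb ms d α η / k11 w mb ms d α η) * Real.cos ψ ^ 2
    - (k02 w mb ms d α η / k11 w mb ms d α η) * Real.sin ψ ^ 2

/-- Piecewise scaled torque `M1`. -/
noncomputable def M1 (w mb ms d α η : ℝ) (ψ : ℝ) : ℝ :=
  Set.indicator (Set.Icc (-α) (Real.pi - α)) (M0minus w mb ms d α η) ψ +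
  Set.indicator (Set.Icc (-Real.pi + α) α) (M0plus w mb ms d α η) ψ

theorem stmt8 (w mb ms d α η : ℝ) (hw : 0 < w) (hmb : 0 < mb) (hms : 0 < ms)
    (hα : α ∈ Set.Ioo 0 (π / 2)) (hη : η ∈ Set.Ioo (0:ℝ) 1)
    (hk : k11 w mb ms d α η ≠ 0) :
    ∀ ψ : ℝ, M1 w mb ms d α η (-ψ) = -M1 w mb ms d α η ψ := by
  intro ψ
  have h1 : (-ψ) ∈ Set.Icc (-α) (π - α) ↔ ψ ∈ Set.Icc (-π + α) α := by
    constructor <;> intro h <;> exact ⟨by linarith [h.1, h.2], by linarith [h.1, h.2]⟩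
  have h2 : (-ψ) ∈ Set.Icc (-π + α) α ↔ ψ ∈ Set.Icc (-α) (π - α) := by
    constructor <;> intro h <;> exact ⟨by linarith [h.1, h.2], by linarith [h.1, h.2]⟩
  have e1 : M0minus w mb ms d α η (-ψ) = -M0plus w mb ms d α η ψ := by
    simp [M0minus, M0plus, mul_neg, Real.sin_neg, Real.cos_neg]; ring
  have e2 : M0plus w mb ms d α η (-ψ) = -M0minus w mb ms d α η ψ := by
    simp [M0minus, M0plus, mul_neg, Real.sin_neg, Real.cos_neg]; ring
  simp only [M1, Set.indicator_apply, h1, h2, e1, e2]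
  split_ifs <;> ring
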